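/- Let Γ be a linearly ordered cancellative additive commutative monoid in which addition is strictly monotone, and let R be an abelian semi-regular ring with J(R) nilpotent. Then the generalized power series ring R[[Γ]] (the Hahn series ring over Γ with coefficients in R) is right McCoy over R: whenever f, g are non-zero elements of R[[Γ]] with f g = 0, there exists a non-zero element c ∈ R such that f(s) · c = 0 for every s ∈ Γ (equivalently, f · c = 0 in R[[Γ]]). -/

import Mathlib

/-- A ring is *abelian* if every idempotent is central. -/
def IsAbelianRing (R : Type*) [Ring R] : Prop :=
  ∀ e : R, IsIdempotentElem e → ∀ a : R, e * a = a * e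

/-- A ring `R` is *semi-regular* if `R/J(R)` is von Neumann regular (for every `a` there is
`b` with `a - a*b*a ∈ J(R)`) and idempotents lift modulo the Jacobson radical `J(R)`. -/
def IsSemiregularRing (R : Type*) [Ring R] : Prop :=
  (∀ a : R, ∃ b : R, a - a * b * a ∈ (⊥ : Ideal R).jacobson) ∧
  ∀ a : R, a * a - a ∈ (⊥ : Ideal R).jacobson →
    ∃ e : R, IsIdempotentElem e ∧ e - a ∈ (⊥ : Ideal R).jacobson

/-- The Jacobson radical `J(R)` is nilpotent: there is `n > 0` such that every product of `n`
elements of `J(R)` vanishes (i.e. `J(R)^n = 0`). -/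
def JacobsonNilpotent (R : Type*) [Ring R] : Prop :=
  ∃ n : ℕ, 0 < n ∧ ∀ l : List R, l.length = n →
    (∀ x ∈ l, x ∈ (⊥ : Ideal R).jacobson) → l.prod = 0

section McCoyAux

variable {R : Type*} [Ring R]

lemma jac_mem_max {x : R} (hx : x ∈ (⊥ : Ideal R).jacobson) {M : Ideal R}
    (hM : M.IsMaximal) : x ∈ M := by
  rw [Ideal.jacobson] at hx
  exact Submodule.mem_sInf.mp hx M ⟨bot_le, hM⟩

lemma jac_left_inv {y : R} (hy : y ∈ (⊥ : Ideal R).jacobson) :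
    ∃ v : R, v * (1 + y) = 1 := by
  by_contra hno
  push_neg at hno
  have hproper : Ideal.span {(1 + y : R)} ≠ ⊤ := by
    intro htop
    have h1 : (1 : R) ∈ Ideal.span {(1 + y : R)} := htop ▸ Submodule.mem_top
    obtain ⟨v, hv⟩ := Submodule.mem_span_singleton.mp h1
    exact hno v hv
  obtain ⟨M, hM, hle⟩ := Ideal.exists_le_maximal _ hproper
  have h1y : (1 + y : R) ∈ M := hle (Ideal.subset_span rfl)
  have hyM : y ∈ M := jac_mem_max hy hM
  have : (1 : R) ∈ M := by
    have := M.sub_mem h1y hyM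
    simpa using this
  exact hM.ne_top (Ideal.eq_top_iff_one M |>.mpr this)

lemma jac_unit {j : R} (hj : j ∈ (⊥ : Ideal R).jacobson) : IsUnit (1 + j) := by
  obtain ⟨v, hv⟩ := jac_left_inv hj
  have hvj : v * j ∈ (⊥ : Ideal R).jacobson := Ideal.mul_mem_left _ v hj
  have hv' : v = 1 + -(v * j) := by
    have : v + v * j = 1 := by rw [← mul_one_add]; exact hv
    linear_combination (norm := noncomm_ring) this
  obtain ⟨w, hw⟩ := jac_left_inv (Submodule.neg_mem _ hvj)
  rw [← hv'] at hw
  -- hw : w * v = 1, hv : v * (1 + y) = 1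
  have hwe : w = 1 + j := by
    calc w = w * (v * (1 + j)) := by rw [hv, mul_one]
    _ = (w * v) * (1 + j) := by rw [mul_assoc]
    _ = 1 + j := by rw [hw, one_mul]
  exact ⟨⟨1 + j, v, by rw [← hwe]; exact hwe ▸ hw, hv⟩, rfl⟩

lemma jac_mul_right {x : R} (hx : x ∈ (⊥ : Ideal R).jacobson) (r : R) :
    x * r ∈ (⊥ : Ideal R).jacobson := by
  rw [Ideal.jacobson, Submodule.mem_sInf]
  rintro M ⟨-, hM⟩
  by_contra hxr
  have hlt : M < M ⊔ Ideal.span {x * r} := by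
    refine lt_of_le_of_ne le_sup_left ?_
    intro heq
    exact hxr (heq ▸ (le_sup_right (α := Ideal R) (Ideal.subset_span rfl)))
  have htop : M ⊔ Ideal.span {x * r} = ⊤ := hM.1.2 _ hlt
  have h1 : (1 : R) ∈ M ⊔ Ideal.span {x * r} := htop ▸ Submodule.mem_top
  obtain ⟨m, hm, z, hz, hmz⟩ := Submodule.mem_sup.mp h1
  obtain ⟨u, hu⟩ := Submodule.mem_span_singleton.mp hz
  -- m + u * (x * r) = 1
  have hmeq : m = 1 - u * (x * r) := by
    rw [← hmz, ← hu, smul_eq_mul]; noncomm_ring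
  have hrux : -(r * u * x) ∈ (⊥ : Ideal R).jacobson :=
    Submodule.neg_mem _ (Ideal.mul_mem_left _ (r * u) hx)
  obtain ⟨V, hV⟩ := jac_unit hrux
  -- (V : R) = 1 - r * u * x
  have hVval : (V : Rˣ) * 1 = V := mul_one V
  have hrm : r * m = (1 + -(r * u * x)) * r := by
    rw [hmeq]; noncomm_ring
  have hr : r = ((V⁻¹ : Rˣ) : R) * (r * m) := by
    rw [hrm, ← hV]
    rw [← mul_assoc]
    simp
  have : x * r = (x * ((V⁻¹ : Rˣ) : R) * r) * m := by
    conv_lhs => rw [hr]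
    noncomm_ring
  exact hxr (this ▸ Ideal.mul_mem_left _ _ hm)

/-- `JDk R k` : left ideal of sums of products `j₁ * (j₂ * (⋯ * y))` with `jᵢ ∈ J(R)`. -/
def JDk (R : Type*) [Ring R] : ℕ → Ideal R
  | 0 => ⊤
  | (k+1) => Ideal.span {z | ∃ j ∈ (⊥ : Ideal R).jacobson, ∃ y ∈ JDk R k, z = j * y}

lemma JDk_succ_mem {j y : R} (hj : j ∈ (⊥ : Ideal R).jacobson) {k : ℕ}
    (hy : y ∈ JDk R k) : j * y ∈ JDk R (k+1) := by
  rw [JDk]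
  exact Ideal.subset_span ⟨j, hj, y, hy, rfl⟩

lemma JDk_mul_right {x : R} {k : ℕ} (hx : x ∈ JDk R k) (r : R) : x * r ∈ JDk R k := by
  induction k generalizing x r with
  | zero => exact Submodule.mem_top
  | succ k ih =>
    rw [JDk] at hx ⊢
    refine Submodule.span_induction ?_ ?_ ?_ ?_ hx
    · rintro z ⟨j, hj, y, hy, rfl⟩
      exact Ideal.subset_span ⟨j, hj, y * r, ih hy r, by rw [mul_assoc]⟩
    · simp
    · intro a b _ _ ha hb
      rw [add_mul]; exact Submodule.add_mem _ ha hb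
    · intro a b _ hb
      rw [smul_eq_mul, mul_assoc]
      exact Ideal.mul_mem_left _ a hb

lemma JDk_nil_aux {n : ℕ}
    (hn : ∀ l : List R, l.length = n → (∀ x ∈ l, x ∈ (⊥ : Ideal R).jacobson) → l.prod = 0) :
    ∀ k : ℕ, ∀ x ∈ JDk R k, ∀ c : List R, (∀ j ∈ c, j ∈ (⊥ : Ideal R).jacobson) →
      c.length + k = n → ∀ r : R, c.prod * r * x = 0 := by
  intro k
  induction k with
  | zero =>
    intro x _ c hc hlen r
    have : c.prod = 0 := hn c (by simpa using hlen) hc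
    rw [this, zero_mul, zero_mul]
  | succ k ih =>
    intro x hx
    rw [JDk] at hx
    refine Submodule.span_induction ?_ ?_ ?_ ?_ hx
    · rintro z ⟨j, hj, y, hy, rfl⟩ c hc hlen r
      have hmem : ∀ a ∈ c ++ [r * j], a ∈ (⊥ : Ideal R).jacobson := by
        intro a ha
        rcases List.mem_append.mp ha with h | h
        · exact hc a h
        · rw [List.mem_singleton.mp h]
          exact Ideal.mul_mem_left _ r hj
      have hlen' : (c ++ [r * j]).length + k = n := by
        simp [List.length_append]; omega
      have := ih y hy (c ++ [r * j]) hmem hlen' 1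
      rw [List.prod_append, List.prod_singleton, mul_one] at this
      calc c.prod * r * (j * y) = c.prod * (r * j) * y := by noncomm_ring
      _ = 0 := this
    · intro c _ _ r; rw [mul_zero]
    · intro a b _ _ ha hb c hc hlen r
      rw [mul_add, ha c hc hlen r, hb c hc hlen r, add_zero]
    · intro a b _ hb c hc hlen r
      rw [smul_eq_mul, show c.prod * r * (a * b) = c.prod * (r * a) * b by noncomm_ring]
      exact hb c hc hlen (r * a)

lemma JDk_nil {n : ℕ}
    (hn : ∀ l : List R, l.length = n → (∀ x ∈ l, x ∈ (⊥ : Ideal R).jacobson) → l.prod = 0)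
    {x : R} (hx : x ∈ JDk R n) : x = 0 := by
  have := JDk_nil_aux hn n x hx [] (by simp) (by simp) 1
  simpa using this

lemma unit_of_two {y u z : R} (h1 : IsUnit (y * u)) (h2 : IsUnit (u * z)) : IsUnit u := by
  obtain ⟨P, hP⟩ := h1
  obtain ⟨Q, hQ⟩ := h2
  have hl : (((P⁻¹ : Rˣ) : R) * y) * u = 1 := by
    rw [mul_assoc, ← hP]
    exact Units.inv_mul P
  have hr : u * (z * ((Q⁻¹ : Rˣ) : R)) = 1 := by
    rw [← mul_assoc, ← hQ]
    exact Units.mul_inv Q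
  have heq : ((P⁻¹ : Rˣ) : R) * y = z * ((Q⁻¹ : Rˣ) : R) := by
    calc ((P⁻¹ : Rˣ) : R) * y = (((P⁻¹ : Rˣ) : R) * y) * (u * (z * ((Q⁻¹ : Rˣ) : R))) := by
          rw [hr, mul_one]
    _ = ((((P⁻¹ : Rˣ) : R) * y) * u) * (z * ((Q⁻¹ : Rˣ) : R)) := by noncomm_ring
    _ = z * ((Q⁻¹ : Rˣ) : R) := by rw [hl, one_mul]
  exact ⟨⟨u, z * ((Q⁻¹ : Rˣ) : R), hr, by rw [← heq]; exact hl⟩, rfl⟩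

/-- Semiregular + abelian decomposition: `a = e*u + j` with `e` central idempotent,
`u` a unit, `j ∈ J(R)`. -/
lemma decomp (hab : IsAbelianRing R) (hsr : IsSemiregularRing R) (a : R) :
    ∃ e u j : R, IsIdempotentElem e ∧ (∀ b : R, e * b = b * e) ∧ IsUnit u ∧
      j ∈ (⊥ : Ideal R).jacobson ∧ a = e * u + j := by
  classical
  set K := (⊥ : Ideal R).jacobson with hK
  obtain ⟨x₀, hρ⟩ := hsr.1 a
  set x : R := x₀ * a * x₀ with hxdef
  have haxa : a - a * x * a ∈ K := by
    have hEq : a - a * x * a = (a - a * x₀ * a) + a * x₀ * (a - a * x₀ * a) := by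
      rw [hxdef]; noncomm_ring
    rw [hEq]
    exact Submodule.add_mem _ hρ (Ideal.mul_mem_left _ _ hρ)
  have hxax : x * a * x - x ∈ K := by
    have hmid : a * x₀ * a * x₀ * a - a ∈ K := by
      have hEq : a * x₀ * a * x₀ * a - a
          = -((a - a * x₀ * a) + a * x₀ * (a - a * x₀ * a)) := by noncomm_ring
      rw [hEq]
      exact Submodule.neg_mem _ (Submodule.add_mem _ hρ (Ideal.mul_mem_left _ _ hρ))
    have hEq : x * a * x - x = x₀ * (a * x₀ * a * x₀ * a - a) * x₀ := by
      rw [hxdef]; noncomm_ring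
    rw [hEq]
    exact jac_mul_right (Ideal.mul_mem_left _ _ hmid) x₀
  have hax2 : (a * x) * (a * x) - a * x ∈ K := by
    have hEq : (a * x) * (a * x) - a * x = -((a - a * x * a) * x) := by noncomm_ring
    rw [hEq]
    exact Submodule.neg_mem _ (jac_mul_right haxa x)
  obtain ⟨e, he, hea⟩ := hsr.2 (a * x) hax2
  have hxa2 : (x * a) * (x * a) - x * a ∈ K := by
    have hEq : (x * a) * (x * a) - x * a = -(x * (a - a * x * a)) := by noncomm_ring
    rw [hEq]
    exact Submodule.neg_mem _ (Ideal.mul_mem_left _ _ haxa)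
  obtain ⟨e', he', he'a⟩ := hsr.2 (x * a) hxa2
  have ce : ∀ b : R, e * b = b * e := hab e he
  have ce' : ∀ b : R, e' * b = b * e' := hab e' he'
  have hax_e : a * x - e ∈ K := by simpa using Submodule.neg_mem _ hea
  have hxa_e' : x * a - e' ∈ K := by simpa using Submodule.neg_mem _ he'a
  have hxe : x * e - x ∈ K := by
    have hEq : x * e - x = x * (e - a * x) + (x * a * x - x) := by noncomm_ring
    rw [hEq]
    exact Submodule.add_mem _ (Ideal.mul_mem_left _ _ hea) hxax
  have hae' : a * e' - a ∈ K := by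
    have hEq : a * e' - a = a * (e' - x * a) + -(a - a * x * a) := by noncomm_ring
    rw [hEq]
    exact Submodule.add_mem _ (Ideal.mul_mem_left _ _ he'a) (Submodule.neg_mem _ haxa)
  have he'a_a : e' * a - a ∈ K := by rw [ce' a]; exact hae'
  have he'e_e : e' * e - e ∈ K := by
    have hEq : e' * e - e = e' * (e - a * x) + (e' * a - a) * x + (a * x - e) := by noncomm_ring
    rw [hEq]
    exact Submodule.add_mem _ (Submodule.add_mem _ (Ideal.mul_mem_left _ _ hea)
      (jac_mul_right he'a_a x)) hax_e
  have he_xa : e * (x * a) - e' ∈ K := by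
    have h1 : e * (x * a) = (x * e) * a := by rw [← mul_assoc, ce x]
    have h2 : (x * e) * a - e' = (x * e - x) * a + (x * a - e') := by noncomm_ring
    rw [h1, h2]
    exact Submodule.add_mem _ (jac_mul_right hxe a) hxa_e'
  have hee'_e' : e * e' - e' ∈ K := by
    have hEq : e * e' - e' = e * (e' - x * a) + (e * (x * a) - e') := by noncomm_ring
    rw [hEq]
    exact Submodule.add_mem _ (Ideal.mul_mem_left _ _ he'a) he_xa
  have hee' : e - e' ∈ K := by
    have hEq : e - e' = -(e' * e - e) + (e' * e - e') := by noncomm_ring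
    rw [hEq]
    refine Submodule.add_mem _ (Submodule.neg_mem _ he'e_e) ?_
    rw [ce' e]
    exact hee'_e'
  -- the unit and the decomposition
  set u : R := e * a + 1 - e with hu
  set v : R := x + 1 - e with hv
  have h3 : (1 - e) * (1 - e) = 1 - e := by
    have : (1 - e) * (1 - e) = 1 - e - e + e * e := by noncomm_ring
    rw [this, he]; noncomm_ring
  have h2 : (e * a) * (1 - e) = 0 := by
    have hstep : (e * a) * (1 - e) = e * a - e * (a * e) := by noncomm_ring
    rw [hstep, ← ce a, ← mul_assoc, he, sub_self]
  have g2 : (1 - e) * (e * a) = 0 := by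
    have hstep : (1 - e) * (e * a) = e * a - e * e * a := by noncomm_ring
    rw [hstep, he, sub_self]
  have h4 : (1 - e) * x = x - x * e := by
    have hstep : (1 - e) * x = x - e * x := by noncomm_ring
    rw [hstep, ce x]
  have h1 : u * v = e * a * x + (e * a) * (1 - e) + (1 - e) * x + (1 - e) * (1 - e) := by
    rw [hu, hv]; noncomm_ring
  have g1 : v * u = x * (e * a) + x * (1 - e) + (1 - e) * (e * a) + (1 - e) * (1 - e) := by
    rw [hu, hv]; noncomm_ring
  have huv : u * v - 1 ∈ K := by
    have hEq : u * v - 1 = e * (a * x - e) + (x - x * e) + (e * e - e) := by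
      rw [h1, h2, h3, h4]; noncomm_ring
    rw [hEq, he, sub_self, add_zero]
    exact Submodule.add_mem _ (Ideal.mul_mem_left _ _ hax_e) (by simpa using Submodule.neg_mem _ hxe)
  have hvu : v * u - 1 ∈ K := by
    have hEq : v * u - 1 = (x * e - x) * a + (x * a - e') + (e' - e) + (x - x * e) := by
      rw [g1, g2, h3]; noncomm_ring
    rw [hEq]
    refine Submodule.add_mem _ (Submodule.add_mem _ (Submodule.add_mem _
      (jac_mul_right hxe a) hxa_e') ?_) (by simpa using Submodule.neg_mem _ hxe)
    simpa using Submodule.neg_mem _ hee'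
  have hUvu : IsUnit (v * u) := by
    have := jac_unit hvu
    simpa using this
  have hUuv : IsUnit (u * v) := by
    have := jac_unit huv
    simpa using this
  have hUu : IsUnit u := unit_of_two hUvu hUuv
  have heu : e * u = e * a := by
    have hstep : e * u = e * e * a + e - e * e := by rw [hu]; noncomm_ring
    rw [hstep, he]; noncomm_ring
  have hj : a - e * u ∈ K := by
    rw [heu]
    have hEq : a - e * a = -((e - a * x) * a + -(a - a * x * a)) := by noncomm_ring
    rw [hEq]
    exact Submodule.neg_mem _ (Submodule.add_mem _ (jac_mul_right hea a)
      (Submodule.neg_mem _ haxa))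
  exact ⟨e, u, a - e * u, he, ce, hUu, hj, by noncomm_ring⟩


end McCoyAux

/-- Let `Γ` be a linearly ordered, cancellative, strictly monotone additive commutative
monoid and `R` an abelian semi-regular ring with `J(R)` nilpotent.  Then the Hahn series
ring `R[[Γ]]` is right McCoy over `R`: if `f * g = 0` with `f, g ≠ 0`, then some non-zero
`c ∈ R` annihilates every coefficient of `f` on the right. -/
theorem hahnSeries_right_mccoy (Γ R : Type*)
    [AddCommMonoid Γ] [LinearOrder Γ] [IsOrderedCancelAddMonoid Γ] [Ring R]
    (hab : IsAbelianRing R) (hsr : IsSemiregularRing R) (hnil : JacobsonNilpotent R)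
    (f g : HahnSeries Γ R) (hf : f ≠ 0) (hg : g ≠ 0) (hfg : f * g = 0) :
    ∃ c : R, c ≠ 0 ∧ ∀ s : Γ, f.coeff s * c = 0 := by
  classical
  obtain ⟨n, hnpos, hnil⟩ := hnil
  obtain ⟨E, U, Jf, hE, hcen, hU, hJmem, hEqd⟩ :
      ∃ (E U Jf : R → R), (∀ a, IsIdempotentElem (E a)) ∧ (∀ a b, E a * b = b * E a) ∧
        (∀ a, IsUnit (U a)) ∧ (∀ a, Jf a ∈ (⊥ : Ideal R).jacobson) ∧
        (∀ a, a = E a * U a + Jf a) := by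
    choose E U Jf hE hcen hU hJmem hEqd using decomp hab hsr
    exact ⟨E, U, Jf, hE, hcen, hU, hJmem, hEqd⟩
  -- coefficient formula for right multiplication by a constant
  have hcoeffmul : ∀ (h : HahnSeries Γ R) (r : R) (t : Γ),
      (h * HahnSeries.single 0 r).coeff t = h.coeff t * r := by
    intro h r t
    have := HahnSeries.coeff_mul_single_add (r := r) (x := h) (a := t) (b := 0)
    rwa [add_zero] at this
  -- depth-maximal right multiple of g
  set P : ℕ → Prop := fun k => ∃ r : R, g * HahnSeries.single 0 r ≠ 0 ∧
      ∀ t, (g * HahnSeries.single 0 r).coeff t ∈ JDk R k with hPdef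
  have hP0 : P 0 := ⟨1, by simpa using hg, fun t => Submodule.mem_top⟩
  set d := Nat.findGreatest P n with hd
  have hPd : P d := Nat.findGreatest_spec (Nat.zero_le n) hP0
  obtain ⟨r₀, hgs0, hdepth⟩ := hPd
  set gs := g * HahnSeries.single 0 r₀ with hgsdef
  have hfgs : f * gs = 0 := by rw [hgsdef, ← mul_assoc, hfg, zero_mul]
  have hdn : d < n := by
    rcases lt_or_eq_of_le (Nat.findGreatest_le (P := P) n) with h | h
    · exact h
    · exfalso
      apply hgs0
      ext t
      rw [HahnSeries.coeff_zero]
      have ht := hdepth t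
      rw [hd, h] at ht
      exact JDk_nil hnil ht
  have hmax : ∀ r : R, (∀ t, (gs * HahnSeries.single 0 r).coeff t ∈ JDk R (d+1)) →
      gs * HahnSeries.single 0 r = 0 := by
    intro r hall
    by_contra hne
    have hP1 : P (d+1) := by
      refine ⟨r₀ * r, ?_, ?_⟩
      · rw [show g * HahnSeries.single 0 (r₀ * r)
            = gs * HahnSeries.single 0 r by
          rw [hgsdef, mul_assoc, HahnSeries.single_mul_single, zero_add]]
        exact hne
      · intro t
        rw [show g * HahnSeries.single 0 (r₀ * r)
            = gs * HahnSeries.single 0 r by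
          rw [hgsdef, mul_assoc, HahnSeries.single_mul_single, zero_add]]
        exact hall t
    exact Nat.findGreatest_is_greatest
      (show Nat.findGreatest P n < d + 1 by rw [← hd]; exact Nat.lt_succ_self d)
      (by omega) hP1
  -- KEY LEMMA
  have hkey : ∀ s ∈ f.support, gs * HahnSeries.single 0 (E (f.coeff s)) = 0 := by
    by_contra hbad
    push_neg at hbad
    set S : Set Γ := {s | s ∈ f.support ∧ gs * HahnSeries.single 0 (E (f.coeff s)) ≠ 0}
      with hSdef
    have hSne : S.Nonempty := by
      obtain ⟨s, hs1, hs2⟩ := hbad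
      exact ⟨s, hs1, hs2⟩
    have hSwf : S.IsWF := f.isWF_support.mono (fun s hs => hs.1)
    set s₀ := hSwf.min hSne with hs₀def
    have hs₀S : s₀ ∈ S := hSwf.min_mem hSne
    have hIH : ∀ u ∈ f.support, u < s₀ → gs * HahnSeries.single 0 (E (f.coeff u)) = 0 := by
      intro u hu hlt
      by_contra hne
      exact hSwf.not_lt_min hSne ⟨hu, hne⟩ hlt
    set e := E (f.coeff s₀) with hedef
    have hcen_e : ∀ b : R, e * b = b * e := fun b => by rw [hedef]; exact hcen _ b
    have hid_e : e * e = e := by rw [hedef]; exact hE _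
    have hinner : ∀ t, e * gs.coeff t ∈ JDk R (d+1) := by
      by_contra hbadT
      push_neg at hbadT
      set T : Set Γ := {t | e * gs.coeff t ∉ JDk R (d+1)} with hTdef
      have hTne : T.Nonempty := hbadT
      have hTsub : T ⊆ gs.support := by
        intro t ht
        rw [HahnSeries.mem_support]
        intro h0
        apply ht
        rw [h0, mul_zero]
        exact Submodule.zero_mem _
      have hTwf : T.IsWF := gs.isWF_support.mono hTsub
      set t₀ := hTwf.min hTne with ht₀def
      have ht₀T : t₀ ∈ T := hTwf.min_mem hTne
      -- the convolution identity at s₀ + t₀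
      have hrel : ∑ ij ∈ Finset.addAntidiagonal f.isPWO_support gs.isPWO_support (s₀ + t₀),
          f.coeff ij.1 * gs.coeff ij.2 = 0 := by
        exact (HahnSeries.coeff_mul (x := f) (y := gs) (a := s₀ + t₀)).symm.trans
          (by rw [hfgs, HahnSeries.coeff_zero])
      have hrel2 : ∑ ij ∈ Finset.addAntidiagonal f.isPWO_support gs.isPWO_support (s₀ + t₀),
          e * (f.coeff ij.1 * gs.coeff ij.2) = 0 := by
        rw [← Finset.mul_sum, hrel, mul_zero]
      have hmemA : ((s₀, t₀) : Γ × Γ) ∈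
          Finset.addAntidiagonal f.isPWO_support gs.isPWO_support (s₀ + t₀) :=
        Finset.mem_addAntidiagonal.mpr ⟨hs₀S.1, hTsub ht₀T, rfl⟩
      have hsplit := Finset.sum_erase_add
        (Finset.addAntidiagonal f.isPWO_support gs.isPWO_support (s₀ + t₀))
        (fun ij => e * (f.coeff ij.1 * gs.coeff ij.2)) hmemA
      have hterm : e * (f.coeff s₀ * gs.coeff t₀) ∈ JDk R (d+1) := by
        have h0 : (∑ ij ∈ (Finset.addAntidiagonal f.isPWO_support gs.isPWO_support
                (s₀ + t₀)).erase (s₀, t₀), e * (f.coeff ij.1 * gs.coeff ij.2))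
              + e * (f.coeff s₀ * gs.coeff t₀) = 0 := by
          simpa using hsplit.trans hrel2
        have heq : e * (f.coeff s₀ * gs.coeff t₀)
            = - ∑ ij ∈ (Finset.addAntidiagonal f.isPWO_support gs.isPWO_support
                (s₀ + t₀)).erase (s₀, t₀), e * (f.coeff ij.1 * gs.coeff ij.2) :=
          eq_neg_of_add_eq_zero_right h0
        rw [heq]
        refine Submodule.neg_mem _ (Submodule.sum_mem _ ?_)
        rintro ⟨u, v⟩ hij
        obtain ⟨hne, hmem⟩ := Finset.mem_erase.mp hij
        obtain ⟨hu, hv, hsum⟩ := Finset.mem_addAntidiagonal.mp hmem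
        rcases lt_trichotomy u s₀ with hlt | heqc | hgt
        · -- u < s₀ : use outer induction hypothesis
          have hz : gs.coeff v * E (f.coeff u) = 0 := by
            have h0 := hIH u hu hlt
            have := congrArg (fun h => HahnSeries.coeff h v) h0
            simpa [hcoeffmul] using this
          have hsplit2 : f.coeff u * gs.coeff v = Jf (f.coeff u) * gs.coeff v := by
            conv_lhs => rw [hEqd (f.coeff u)]
            rw [add_mul]
            have h1 : E (f.coeff u) * U (f.coeff u) * gs.coeff v = 0 := by
              rw [hcen (f.coeff u) (U (f.coeff u)), mul_assoc,
                hcen (f.coeff u) (gs.coeff v), ← mul_assoc, mul_assoc, hz, mul_zero]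
            rw [h1, zero_add]
          rw [hsplit2]
          exact Ideal.mul_mem_left _ _ (JDk_succ_mem (hJmem _) (hdepth v))
        · -- u = s₀ : impossible (erased)
          exfalso
          apply hne
          have : v = t₀ := by
            apply add_left_cancel (a := s₀)
            rw [← heqc] at hsum ⊢
            exact hsum
          rw [Prod.mk.injEq]
          exact ⟨heqc, this⟩
        · -- u > s₀ : then v < t₀, use inner minimality
          have hvlt : v < t₀ := by
            by_contra hge
            push_neg at hge
            have : s₀ + t₀ < u + v := add_lt_add_of_lt_of_le hgt hge
            rw [hsum] at this
            exact lt_irrefl _ this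
          have hvT : v ∉ T := fun hmem' => hTwf.not_lt_min hTne hmem' hvlt
          have hvmem : e * gs.coeff v ∈ JDk R (d+1) := not_not.mp hvT
          have heq2 : e * (f.coeff u * gs.coeff v) = f.coeff u * (e * gs.coeff v) := by
            rw [← mul_assoc, hcen_e (f.coeff u), mul_assoc]
          rw [heq2]
          exact Ideal.mul_mem_left _ _ hvmem
      -- extract e * gs.coeff t₀ ∈ JDk (d+1)
      have hswap : ∀ z c : R, e * (z * c) = z * (e * c) := by
        intro z c
        rw [← mul_assoc, hcen_e z, mul_assoc]
      have hexp : e * (f.coeff s₀ * gs.coeff t₀)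
          = U (f.coeff s₀) * (e * gs.coeff t₀) + Jf (f.coeff s₀) * (e * gs.coeff t₀) := by
        conv_lhs => rw [show f.coeff s₀ = e * U (f.coeff s₀) + Jf (f.coeff s₀) by
          rw [hedef]; exact hEqd (f.coeff s₀)]
        calc e * ((e * U (f.coeff s₀) + Jf (f.coeff s₀)) * gs.coeff t₀)
            = (e * e) * (U (f.coeff s₀) * gs.coeff t₀)
              + e * (Jf (f.coeff s₀) * gs.coeff t₀) := by noncomm_ring
        _ = e * (U (f.coeff s₀) * gs.coeff t₀) + e * (Jf (f.coeff s₀) * gs.coeff t₀) := by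
              rw [hid_e]
        _ = U (f.coeff s₀) * (e * gs.coeff t₀) + Jf (f.coeff s₀) * (e * gs.coeff t₀) := by
              rw [hswap (U (f.coeff s₀)), hswap (Jf (f.coeff s₀))]
      have hterm2 : U (f.coeff s₀) * (e * gs.coeff t₀) ∈ JDk R (d+1) := by
        have : U (f.coeff s₀) * (e * gs.coeff t₀)
            = e * (f.coeff s₀ * gs.coeff t₀) - Jf (f.coeff s₀) * (e * gs.coeff t₀) := by
          rw [hexp]; noncomm_ring
        rw [this]
        refine Submodule.sub_mem _ hterm (JDk_succ_mem (hJmem _) ?_)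
        exact Ideal.mul_mem_left _ _ (hdepth t₀)
      obtain ⟨W, hW⟩ := hU (f.coeff s₀)
      have : e * gs.coeff t₀ = ((W⁻¹ : Rˣ) : R) * (U (f.coeff s₀) * (e * gs.coeff t₀)) := by
        rw [← hW, ← mul_assoc, Units.inv_mul, one_mul]
      exact ht₀T (this ▸ Ideal.mul_mem_left _ _ hterm2)
    -- now μ-maximality forces gs * single 0 e = 0, contradicting s₀ ∈ S
    have h0 : gs * HahnSeries.single 0 e = 0 := by
      apply hmax
      intro t
      rw [hcoeffmul, ← hcen_e (gs.coeff t)]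
      exact hinner t
    exact hs₀S.2 (by rw [← hedef]; exact h0)
  -- coefficient form of the key lemma
  have hkeyc : ∀ s ∈ f.support, ∀ t, gs.coeff t * E (f.coeff s) = 0 := by
    intro s hs t
    have := congrArg (fun h => HahnSeries.coeff h t) (hkey s hs)
    simpa [hcoeffmul] using this
  -- chains
  set Ch : ℕ → Set R := fun k => Nat.rec (Set.range gs.coeff)
      (fun _ S => {x | ∃ s y, y ∈ S ∧ x = f.coeff s * y}) k with hChdef
  have hCh0 : ∀ x, x ∈ Ch 0 ↔ ∃ t, gs.coeff t = x := fun x => Iff.rfl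
  have hChS : ∀ k x, x ∈ Ch (k+1) ↔ ∃ s y, y ∈ Ch k ∧ x = f.coeff s * y := fun k x => Iff.rfl
  have hChform : ∀ k, ∀ x ∈ Ch k, x = 0 ∨ ∃ l : List R, ∃ t : Γ,
      (∀ j ∈ l, j ∈ (⊥ : Ideal R).jacobson) ∧ l.length = k ∧ x = l.prod * gs.coeff t := by
    intro k
    induction k with
    | zero =>
      rintro x ⟨t, rfl⟩
      right
      exact ⟨[], t, by simp, by simp, by simp⟩
    | succ k ih =>
      rintro x ⟨s, y, hy, rfl⟩
      rcases ih y hy with rfl | ⟨l, t, hl, hlen, rfl⟩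
      · left; rw [mul_zero]
      · by_cases hs : s ∈ f.support
        · right
          have hz : gs.coeff t * E (f.coeff s) = 0 := hkeyc s hs t
          refine ⟨Jf (f.coeff s) :: l, t, ?_, by simp [hlen], ?_⟩
          · intro j hj
            rcases List.mem_cons.mp hj with rfl | h
            · exact hJmem _
            · exact hl j h
          · have hid : E (f.coeff s) * E (f.coeff s) = E (f.coeff s) := hE (f.coeff s)
            have hfirst : E (f.coeff s) * (U (f.coeff s) * (l.prod * gs.coeff t)) = 0 := by
              rw [hcen (f.coeff s) (U (f.coeff s) * (l.prod * gs.coeff t))]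
              rw [mul_assoc, mul_assoc, hz, mul_zero, mul_zero]
            calc f.coeff s * (l.prod * gs.coeff t)
                = E (f.coeff s) * (U (f.coeff s) * (l.prod * gs.coeff t))
                  + Jf (f.coeff s) * (l.prod * gs.coeff t) := by
                  conv_lhs => rw [hEqd (f.coeff s)]
                  noncomm_ring
            _ = Jf (f.coeff s) * (l.prod * gs.coeff t) := by rw [hfirst, zero_add]
            _ = (Jf (f.coeff s) :: l).prod * gs.coeff t := by
                  rw [List.prod_cons, mul_assoc]
        · left
          have h0 : f.coeff s = 0 := by
            by_contra h
            exact hs ((HahnSeries.mem_support f s).mpr h)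
          rw [h0, zero_mul]
  have hChnil : ∀ x ∈ Ch n, x = 0 := by
    intro x hx
    rcases hChform n x hx with rfl | ⟨l, t, hl, hlen, rfl⟩
    · rfl
    · rw [hnil l hlen hl, zero_mul]
  set P' : ℕ → Prop := fun k => ∃ x, x ∈ Ch k ∧ x ≠ 0 with hP'def
  have hP'0 : P' 0 := by
    have : ∃ t, gs.coeff t ≠ 0 := by
      by_contra h
      push_neg at h
      exact hgs0 (HahnSeries.ext (funext fun t => by simp [h t]))
    obtain ⟨t, ht⟩ := this
    exact ⟨gs.coeff t, ⟨t, rfl⟩, ht⟩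
  set k₀ := Nat.findGreatest P' n with hk₀
  have hP'k : P' k₀ := Nat.findGreatest_spec (Nat.zero_le n) hP'0
  obtain ⟨w, hw, hwne⟩ := hP'k
  have hklt : k₀ < n := by
    rcases lt_or_eq_of_le (Nat.findGreatest_le (P := P') n) with h | h
    · exact h
    · exfalso
      have hwn : w ∈ Ch n := by rw [hk₀, h] at hw; exact hw
      exact hwne (hChnil w hwn)
  refine ⟨w, hwne, fun s => ?_⟩
  by_contra hne
  exact Nat.findGreatest_is_greatest
    (show Nat.findGreatest P' n < k₀ + 1 by rw [← hk₀]; exact Nat.lt_succ_self k₀)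
    (by omega) ⟨f.coeff s * w, ⟨s, w, hw, rfl⟩, hne⟩
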